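/- Let v¹, v², w ∈ ℝ², ε₁, ε₂ > 0, and set w¹ := w + ε₁·(v¹ − v²) and w² := w − ε₂·(v¹ − v²). Let x̃¹, x̃², ẑ ∈ ℝ² satisfy ⟪w, x̃¹⟫ = ⟪w, x̃²⟫, ⟪v¹, x̃¹⟫ > ⟪v¹, x̃²⟫, ⟪v², x̃²⟫ > ⟪v², x̃¹⟫, ⟪w¹, ẑ − x̃¹⟫ = 0 and ⟪w², ẑ − x̃²⟫ = 0. Then ⟪w, ẑ − x̃¹⟫ > 0 and ⟪w, ẑ − x̃²⟫ > 0; that is, ẑ lies in the open halfspaces x̃¹ + int H⁺(w) and x̃² + int H⁺(w). -/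

import Mathlib

open scoped RealInnerProductSpace

abbrev E2 := EuclideanSpace ℝ (Fin 2)

theorem stmt13 (v1 v2 w : E2) (eps1 eps2 : ℝ) (he1 : 0 < eps1) (he2 : 0 < eps2)
    (x1 x2 zHat : E2)
    (hw : ⟪w, x1⟫ = ⟪w, x2⟫)
    (hv1 : ⟪v1, x2⟫ < ⟪v1, x1⟫)
    (hv2 : ⟪v2, x1⟫ < ⟪v2, x2⟫)
    (hz1 : ⟪w + eps1 • (v1 - v2), zHat - x1⟫ = 0)
    (hz2 : ⟪w - eps2 • (v1 - v2), zHat - x2⟫ = 0) :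
    0 < ⟪w, zHat - x1⟫ ∧ 0 < ⟪w, zHat - x2⟫ := by
  simp only [inner_add_left, inner_sub_left, inner_sub_right, inner_smul_left,
    RCLike.ofReal_real_eq_id, id, conj_trivial] at *
  have h := congrArg (fun t => eps2 * t) hz1
  have h' := congrArg (fun t => eps1 * t) hz2
  constructor <;> nlinarith [mul_pos he1 he2, h, h', mul_lt_mul_of_pos_left hv1 (mul_pos he1 he2), mul_lt_mul_of_pos_left hv2 (mul_pos he1 he2)]
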